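/- arXiv:1105.5798 — 3 statements merged into one kernel-verified Lean document; each statement's English description precedes it below -/
import Mathlib

section
/- Let k be a positive integer, r > 0, and suppose reals δ_j ≥ 0, β*_j ≥ 0, and σ_j ∈ {−1, 0, 1} for 0 ≤ j ≤ k−1, together with a real number R of the form R = k − σ_k β*_k (with σ_k ∈ {−1,0,1}, β*_k ≥ 0), satisfy: (i) ∑_{j=0}^{k−1} (δ_j + r β*_j) = 1, (ii) ∑_{j=0}^{k−1} (j δ_j + (r j + σ_j) β*_j) = k − σ_k β*_k, (iii) ∑_{j=0}^{k−1} (j² δ_j + (r j² + 2 j σ_j) β*_j) = k(k − 2 σ_k β*_k). Then r ≤ 2. -/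
open Finset

theorem dwssp_lmm_bound (k : ℕ) (hk : 1 ≤ k) (r : ℝ) (hr : 0 < r)
    (δ βs σ : ℕ → ℝ) (σk βk : ℝ)
    (hδ : ∀ j < k, 0 ≤ δ j) (hβ : ∀ j < k, 0 ≤ βs j)
    (hσ : ∀ j < k, σ j = -1 ∨ σ j = 0 ∨ σ j = 1)
    (hσk : σk = -1 ∨ σk = 0 ∨ σk = 1) (hβk : 0 ≤ βk)
    (h0 : ∑ j ∈ range k, (δ j + r * βs j) = 1)
    (h1 : ∑ j ∈ range k, ((j : ℝ) * δ j + (r * j + σ j) * βs j) = k - σk * βk)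
    (h2 : ∑ j ∈ range k, ((j : ℝ) ^ 2 * δ j + (r * j ^ 2 + 2 * j * σ j) * βs j)
        = k * (k - 2 * σk * βk)) :
    r ≤ 2 := by
  by_contra h
  push_neg at h
  -- combination h2 - 2k h1 + k² h0 = 0
  have key : ∑ j ∈ range k,
      (((j:ℝ) - k) ^ 2 * δ j + (r * ((j:ℝ) - k) ^ 2 + 2 * ((j:ℝ) - k) * σ j) * βs j) = 0 := by
    have e : ∀ j ∈ range k,
        (((j:ℝ) - k) ^ 2 * δ j + (r * ((j:ℝ) - k) ^ 2 + 2 * ((j:ℝ) - k) * σ j) * βs j)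
        = ((j : ℝ) ^ 2 * δ j + (r * j ^ 2 + 2 * j * σ j) * βs j)
          - 2 * k * ((j : ℝ) * δ j + (r * j + σ j) * βs j)
          + (k:ℝ) ^ 2 * (δ j + r * βs j) := by
      intro j _; ring
    rw [Finset.sum_congr rfl e]
    rw [Finset.sum_add_distrib, Finset.sum_sub_distrib, ← Finset.mul_sum, ← Finset.mul_sum]
    rw [h0, h1, h2]
    ring
  -- lower bound each term
  have hb : ∀ j ∈ range k,
      (1 - 2 / r) * (δ j + r * βs j) ≤
      (((j:ℝ) - k) ^ 2 * δ j + (r * ((j:ℝ) - k) ^ 2 + 2 * ((j:ℝ) - k) * σ j) * βs j) := by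
    intro j hj
    rw [Finset.mem_range] at hj
    have hδj := hδ j hj
    have hβj := hβ j hj
    have ht : (j:ℝ) - k ≤ -1 := by
      have : (j:ℝ) + 1 ≤ k := by exact_mod_cast Nat.succ_le_of_lt hj
      linarith
    have hσ1 : -1 ≤ σ j ∧ σ j ≤ 1 := by
      rcases hσ j hj with h' | h' | h' <;> rw [h'] <;> norm_num
    have hd : (1 - 2 / r) ≤ ((j:ℝ) - k) ^ 2 := by
      nlinarith [div_pos (by norm_num : (0:ℝ) < 2) hr]
    have hbcoef : (1 - 2 / r) * r ≤ r * ((j:ℝ) - k) ^ 2 + 2 * ((j:ℝ) - k) * σ j := by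
      have h1 : 2 * ((j:ℝ) - k) ≤ 2 * ((j:ℝ) - k) * σ j := by nlinarith [hσ1.1, hσ1.2]
      have h2 : (1 - 2 / r) * r = r - 2 := by field_simp
      have h3 : (0:ℝ) ≤ (-(((j:ℝ) - k) + 1)) * (-(r * (((j:ℝ) - k) - 1) + 2)) := by
        apply mul_nonneg <;> nlinarith
      nlinarith [h1, h2, h3]
    nlinarith [mul_le_mul_of_nonneg_right hd hδj, mul_le_mul_of_nonneg_right hbcoef hβj]
  have hsum := Finset.sum_le_sum hb
  rw [← Finset.mul_sum, h0, key, mul_one] at hsum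
  have : 0 < 1 - 2 / r := by
    have : 2 / r < 1 := (div_lt_one (by linarith)).mpr h
    linarith
  linarith
end

section
/- Let k ≥ 1 and let reals δ_j ≥ 0, c_j for 0 ≤ j ≤ k−1 satisfy ∑_{j=0}^{k−1} (−(k−j)² δ_j + c_j) = 0, where each c_j = (−r(k−j)² + 2σ_j(k−j)) β*_j with β*_j ≥ 0, σ_j ∈ {−1,0,1}, and r > 0. If not all β*_j are zero or some δ_j > 0 forces the sum to be negative unless some term is nonnegative, then there exists j with 0 ≤ j ≤ k−1 such that −r(k−j)² + 2σ_j(k−j) ≥ 0, and consequently r ≤ 2. -/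
open Finset

theorem dwssp_lmm_key_step (k : ℕ) (hk : 1 ≤ k) (r : ℝ) (hr : 0 < r)
    (δ βs σ c : ℕ → ℝ)
    (hδ : ∀ j < k, 0 ≤ δ j) (hβ : ∀ j < k, 0 ≤ βs j)
    (hσ : ∀ j < k, σ j = -1 ∨ σ j = 0 ∨ σ j = 1)
    (hc : ∀ j < k, c j = (-r * ((k : ℝ) - j) ^ 2 + 2 * σ j * ((k : ℝ) - j)) * βs j)
    (hsum : ∑ j ∈ range k, (-(((k : ℝ) - j) ^ 2) * δ j + c j) = 0)
    (hnz : ¬ (∀ j < k, δ j = 0 ∧ βs j = 0)) :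
    (∃ j < k, -r * ((k : ℝ) - j) ^ 2 + 2 * σ j * ((k : ℝ) - j) ≥ 0) ∧ r ≤ 2 := by
  have hkj : ∀ j < k, (1 : ℝ) ≤ (k : ℝ) - j := by
    intro j hj
    have : (j : ℝ) + 1 ≤ (k : ℝ) := by exact_mod_cast Nat.succ_le_of_lt hj
    linarith
  have hex : ∃ j < k, -r * ((k : ℝ) - j) ^ 2 + 2 * σ j * ((k : ℝ) - j) ≥ 0 := by
    by_contra hno
    push_neg at hno
    apply hnz
    have hterm : ∀ j ∈ range k, -(((k : ℝ) - j) ^ 2) * δ j + c j ≤ 0 := by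
      intro j hj
      rw [mem_range] at hj
      have h1 := hkj j hj
      have h2 := hδ j hj
      have h3 := hβ j hj
      have h4 := hno j hj
      rw [hc j hj]
      have : (-r * ((k : ℝ) - j) ^ 2 + 2 * σ j * ((k : ℝ) - j)) * βs j ≤ 0 :=
        mul_nonpos_of_nonpos_of_nonneg (le_of_lt h4) h3
      nlinarith
    have hall : ∀ j ∈ range k, -(((k : ℝ) - j) ^ 2) * δ j + c j = 0 := by
      intro j hj
      have := Finset.sum_eq_zero_iff_of_nonpos hterm |>.mp hsum
      exact this j hj
    intro j hj
    have h0 := hall j (mem_range.mpr hj)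
    have h1 := hkj j hj
    have h2 := hδ j hj
    have h3 := hβ j hj
    have h4 := hno j hj
    rw [hc j hj] at h0
    have hA : (-r * ((k : ℝ) - j) ^ 2 + 2 * σ j * ((k : ℝ) - j)) * βs j ≤ 0 :=
      mul_nonpos_of_nonpos_of_nonneg (le_of_lt h4) h3
    have hB : -(((k : ℝ) - j) ^ 2) * δ j ≤ 0 := by nlinarith
    have hx2 : 0 < ((k : ℝ) - j) ^ 2 := by nlinarith
    have hz : ((k : ℝ) - j) ^ 2 * δ j = 0 := by linarith
    have hδ0 : δ j = 0 := by
      rcases mul_eq_zero.mp hz with h | h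
      · exact absurd h (ne_of_gt hx2)
      · exact h
    have hβ0 : βs j = 0 := by
      by_contra hb
      have hbpos : 0 < βs j := lt_of_le_of_ne h3 (Ne.symm hb)
      nlinarith
    exact ⟨hδ0, hβ0⟩
  refine ⟨hex, ?_⟩
  obtain ⟨j, hj, hA⟩ := hex
  have h1 := hkj j hj
  have hσj := hσ j hj
  have hσle : σ j ≤ 1 := by rcases hσj with h | h | h <;> simp [h]
  set x : ℝ := (k : ℝ) - j with hx
  have hx0 : 0 < x := by linarith
  have h2σ : 2 * σ j * x ≤ 2 * x := by nlinarith
  have hrx2 : r * x * x ≤ 2 * x := by nlinarith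
  have hrx : r * x ≤ 2 := (mul_le_mul_iff_of_pos_right hx0).mp hrx2
  nlinarith [mul_le_mul_of_nonneg_left h1 hr.le]
end

section
/- Let L be a real n×n matrix and r > 0 a real number. Suppose a matrix-valued function of the form ψ(ΔtL, ΔtL̃) = (I + (Δt/r)L)² · (I + ((r²−4r+2)/(2r)) Δt L̃ − ((r²−2r−2)/(2r)) Δt L − ((r²−4r+1)/(2r²)) Δt² L L̃)^{−1} is well-defined for small Δt (with L̃ another n×n matrix). Then its first-order Taylor expansion in Δt is ψ = I + Δt L + ((r²−4r+2)/(2r)) Δt (L − L̃) + O(Δt²). -/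
open Filter Asymptotics

attribute [local instance] Matrix.normedAddCommGroup Matrix.normedSpace

set_option maxHeartbeats 2000000 in
theorem dwrk_update_matrix_expansion (n : ℕ) (L Lt : Matrix (Fin n) (Fin n) ℝ)
    (r : ℝ) (hr : 0 < r) (ψ : ℝ → Matrix (Fin n) (Fin n) ℝ)
    (hψ : ∀ᶠ Δt in nhds (0 : ℝ),
      IsUnit ((1 + (((r ^ 2 - 4 * r + 2) / (2 * r)) * Δt) • Lt
          - (((r ^ 2 - 2 * r - 2) / (2 * r)) * Δt) • L
          - (((r ^ 2 - 4 * r + 1) / (2 * r ^ 2)) * Δt ^ 2) • (L * Lt)).det) ∧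
        ψ Δt = (1 + (Δt / r) • L) ^ 2 *
          (1 + (((r ^ 2 - 4 * r + 2) / (2 * r)) * Δt) • Lt
            - (((r ^ 2 - 2 * r - 2) / (2 * r)) * Δt) • L
            - (((r ^ 2 - 4 * r + 1) / (2 * r ^ 2)) * Δt ^ 2) • (L * Lt))⁻¹) :
    (fun Δt : ℝ => ψ Δt - (1 + Δt • L + (((r ^ 2 - 4 * r + 2) / (2 * r)) * Δt) • (L - Lt)))
      =O[nhds 0] (fun Δt : ℝ => Δt ^ 2) := by
  have hrne : r ≠ 0 := hr.ne'
  set a : ℝ := (r ^ 2 - 4 * r + 2) / (2 * r) with ha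
  set b : ℝ := (r ^ 2 - 2 * r - 2) / (2 * r) with hb
  set c : ℝ := (r ^ 2 - 4 * r + 1) / (2 * r ^ 2) with hc
  set M : ℝ → Matrix (Fin n) (Fin n) ℝ :=
    fun t => 1 + (a * t) • Lt - (b * t) • L - (c * t ^ 2) • (L * Lt) with hM
  set C : ℝ → Matrix (Fin n) (Fin n) ℝ := fun t =>
    (1 / r ^ 2 + (1 + a) * b) • (L * L) + (c - (1 + a) * a) • (L * Lt)
      - (a * b) • (Lt * L) + (a ^ 2) • (Lt * Lt)
      + (c * (1 + a) * t) • (L * (L * Lt)) - (c * a * t) • (Lt * (L * Lt)) with hC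
  have key : ∀ t : ℝ,
      (1 + (t / r) • L) ^ 2 - (1 + t • L + (a * t) • (L - Lt)) * M t = t ^ 2 • C t := by
    intro t
    rw [sq, hM, hC]
    simp only [mul_add, add_mul, mul_sub, sub_mul, Matrix.smul_mul, Matrix.mul_smul,
      mul_one, one_mul, smul_smul, smul_sub, smul_add]
    match_scalars
    all_goals try simp only [ha, hb, hc]
    all_goals try field_simp
    all_goals ring
  set g : ℝ → Matrix (Fin n) (Fin n) ℝ := fun t => C t * (M t)⁻¹ with hg
  have hMcont : Continuous M := by
    rw [hM]; fun_prop
  have hM0 : M 0 = 1 := by simp [hM]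
  have hgcont : ContinuousAt g 0 := by
    have hCcont : Continuous C := by rw [hC]; fun_prop
    apply ContinuousAt.mul hCcont.continuousAt
    have : ContinuousAt Inv.inv (M 0) := by
      apply continuousAt_matrix_inv
      rw [hM0]
      simp only [Matrix.det_one]
      exact NormedRing.inverse_continuousAt (1 : ℝˣ)
    exact this.comp hMcont.continuousAt
  have hev : ∀ᶠ t in nhds (0 : ℝ),
      ψ t - (1 + t • L + (a * t) • (L - Lt)) = t ^ 2 • g t := by
    filter_upwards [hψ] with t ht
    obtain ⟨hdet, hψt⟩ := ht
    have hMinv : M t * (M t)⁻¹ = 1 := Matrix.mul_nonsing_inv _ hdet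
    calc ψ t - (1 + t • L + (a * t) • (L - Lt))
        = (1 + (t / r) • L) ^ 2 * (M t)⁻¹
            - (1 + t • L + (a * t) • (L - Lt)) * (M t * (M t)⁻¹) := by
          rw [hψt, hMinv, mul_one]
      _ = ((1 + (t / r) • L) ^ 2 - (1 + t • L + (a * t) • (L - Lt)) * M t) * (M t)⁻¹ := by
          conv_rhs => rw [Matrix.sub_mul]
          rw [Matrix.mul_assoc]
      _ = (t ^ 2 • C t) * (M t)⁻¹ := by rw [key t]
      _ = t ^ 2 • g t := by rw [Matrix.smul_mul, hg]
  have hbound : ∀ᶠ t in nhds (0 : ℝ), ‖g t‖ ≤ ‖g 0‖ + 1 := by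
    have := (hgcont.norm : ContinuousAt (fun t => ‖g t‖) 0)
    exact this.eventually_le_const (by linarith [norm_nonneg (g 0)])
  rw [isBigO_iff]
  refine ⟨‖g 0‖ + 1, ?_⟩
  filter_upwards [hev, hbound] with t h1 h2
  rw [h1, norm_smul]
  have : ‖(t : ℝ) ^ 2‖ = ‖t ^ 2‖ := rfl
  have hnn : (0 : ℝ) ≤ ‖t ^ 2‖ := norm_nonneg _
  calc ‖t ^ 2‖ * ‖g t‖ ≤ ‖t ^ 2‖ * (‖g 0‖ + 1) := by
        exact mul_le_mul_of_nonneg_left h2 hnn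
    _ = (‖g 0‖ + 1) * ‖t ^ 2‖ := mul_comm _ _
end
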